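/- Compression set of the union after discarding: if Algorithm B iteratively calls a sub-algorithm A on a shrinking sample set D, each call returning a compression set Cᵢ ⊆ D which is then removed from D and added to R, then upon termination R = ⋃ᵢ Cᵢ, the Cᵢ are pairwise disjoint, and rerunning B on R (instead of the full D) yields the same final output; in particular R is a compression set for B. -/
import Mathlib


theorem discarding_compression {Ξ Θ : Type*} [DecidableEq Ξ]
    (A : Θ → Finset Ξ → Θ × Finset Ξ) (n : ℕ)
    (θ : ℕ → Θ) (D R : ℕ → Finset Ξ) (C : ℕ → Finset Ξ)
    (hR0 : R 0 = ∅)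
    (hstep : ∀ i < n,
      (θ (i + 1), C i) = A (θ i) (D i) ∧
      D (i + 1) = D i \ C i ∧
      R (i + 1) = R i ∪ C i ∧
      C i ⊆ D i ∧ (C i).Nonempty)
    -- A returns the same output on any subset of the input that contains
    -- the returned compression set (compression property of the sub-algorithm)
    (hA : ∀ (t : Θ) (d d' : Finset Ξ), (A t d).2 ⊆ d' → d' ⊆ d → A t d' = A t d) :
    R n = (Finset.range n).biUnion C ∧
    (∀ i < n, ∀ j < n, i ≠ j → Disjoint (C i) (C j)) ∧
    (∀ (θ' : ℕ → Θ) (D' : ℕ → Finset Ξ),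
      θ' 0 = θ 0 → D' 0 = R n →
      (∀ i < n, θ' (i + 1) = (A (θ' i) (D' i)).1 ∧
        D' (i + 1) = D' i \ (A (θ' i) (D' i)).2) →
      θ' n = θ n) := by
  -- R m = biUnion of C over range m, for m ≤ n
  have hRm : ∀ m ≤ n, R m = (Finset.range m).biUnion C := by
    intro m hm
    induction m with
    | zero => simpa using hR0
    | succ k ih =>
      have hk : k < n := hm
      obtain ⟨_, _, hRk, _, _⟩ := hstep k hk
      rw [hRk, ih (le_of_lt hk), Finset.range_add_one, Finset.biUnion_insert,
        Finset.union_comm]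
  -- monotonicity of D
  have hmono : ∀ i j, i ≤ j → j ≤ n → D j ⊆ D i := by
    intro i j hij hjn
    induction j with
    | zero => simp [Nat.le_zero.mp hij]
    | succ k ih =>
      rcases Nat.lt_or_ge i (k+1) with h | h
      · have hk : k < n := hjn
        obtain ⟨_, hD, _, _, _⟩ := hstep k hk
        rw [hD]
        exact (Finset.sdiff_subset).trans (ih (Nat.lt_succ_iff.mp h) (le_of_lt hk))
      · have : i = k + 1 := le_antisymm hij h
        simp [this]
  -- disjointness, ordered version
  have hdisj : ∀ i j, i < j → j < n → Disjoint (C i) (C j) := by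
    intro i j hij hjn
    obtain ⟨_, hD, _, _, _⟩ := hstep i (lt_trans hij hjn)
    obtain ⟨_, _, _, hCj, _⟩ := hstep j hjn
    have : C j ⊆ D i \ C i := by
      rw [← hD]
      exact hCj.trans (hmono (i+1) j hij (le_of_lt hjn))
    exact Finset.disjoint_sdiff.mono_right this
  refine ⟨hRm n le_rfl, ?_, ?_⟩
  · intro i hi j hj hij
    rcases Nat.lt_or_ge i j with h | h
    · exact hdisj i j h hj
    · exact (hdisj j i (by omega) hi).symm
  · intro θ' D' hθ0 hD0 hstep'
    -- invariant: θ' i = θ i and D' i = biUnion of C over Ico i n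
    have key : ∀ i ≤ n, θ' i = θ i ∧ D' i = (Finset.Ico i n).biUnion C := by
      intro i hin
      induction i with
      | zero =>
        refine ⟨hθ0, ?_⟩
        rw [hD0, hRm n le_rfl, Finset.range_eq_Ico]
      | succ k ih =>
        have hk : k < n := hin
        obtain ⟨hθk, hDk⟩ := ih (le_of_lt hk)
        obtain ⟨hAeq, hD, _, hCk, _⟩ := hstep k hk
        have hCsub : C k ⊆ D' k := by
          rw [hDk]
          intro x hx
          exact Finset.mem_biUnion.mpr ⟨k, by simp [hk], hx⟩
        have hDsub : D' k ⊆ D k := by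
          rw [hDk]
          intro x hx
          obtain ⟨j, hj, hxj⟩ := Finset.mem_biUnion.mp hx
          simp only [Finset.mem_Ico] at hj
          obtain ⟨_, _, _, hCj, _⟩ := hstep j hj.2
          exact hmono k j hj.1 (le_of_lt hj.2) (hCj hxj)
        have hA2 : (A (θ k) (D k)).2 = C k := by rw [← hAeq]
        have hAeq' : A (θ' k) (D' k) = A (θ k) (D k) := by
          rw [hθk]
          exact hA (θ k) (D k) (D' k) (hA2 ▸ hCsub) hDsub
        obtain ⟨hθs, hDs⟩ := hstep' k hk
        constructor
        · rw [hθs, hAeq', ← hAeq]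
        · rw [hDs, hAeq', hA2, hDk]
          ext x
          simp only [Finset.mem_sdiff, Finset.mem_biUnion, Finset.mem_Ico]
          constructor
          · rintro ⟨⟨j, hj, hxj⟩, hx⟩
            refine ⟨j, ⟨?_, hj.2⟩, hxj⟩
            rcases Nat.lt_or_ge j (k+1) with h | h
            · exact absurd hxj (fun hxj => hx (by
                have : j = k := by omega
                exact this ▸ hxj))
            · exact h
          · rintro ⟨j, hj, hxj⟩
            refine ⟨⟨j, ⟨by omega, hj.2⟩, hxj⟩, fun hx => ?_⟩
            exact (hdisj k j (by omega) hj.2).forall_ne_finset hx hxj rfl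
    exact (key n le_rfl).1
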